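/- arXiv:1703.01981 — 2 statements merged into one kernel-verified Lean document; each statement's English description precedes it below -/
import Mathlib

section
/- Let N, n ≥ 1, p > 1, ε > 0, δ > 0 with ε ≤ δ/2, and let g^ε_{ξ_1,…,ξ_n} : ℝ → [0,∞) satisfy g^ε_{ξ_1,…,ξ_n}(t) ≤ C_{ξ_1,…,ξ_n}(|t|^{p/n} + 1) with ∑ C_{ξ_1,…,ξ_n} < ∞, and define φ^ε(z) = ∑_{ξ_1,…,ξ_n ∈ ℤ^N} g^ε_{ξ_1,…,ξ_n}(det(D^{ξ_1}_ε z(0), …, D^{ξ_n}_ε z(0))) + ∑_{m=1}^N |D^{e_m}_ε z(0)|^p for z : εℤ^N → ℝ^n. If z, w : εℤ^N → ℝ^n satisfy z(j) = w(j) for all j ∈ εℤ^N with |j|_∞ ≤ δ/2, then φ^ε(z) ≤ φ^ε(w) + ∑_{(ξ_1,…,ξ_n) : ε|ξ_l|_∞ > δ/2 for some l} C_{ξ_1,…,ξ_n} ((1/n) ∑_{l=1}^n |D^{ξ_l}_ε z(0)|^p + 1); in particular the discrete-determinant densities satisfy the vanishing non-locality property (H4). -/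
open scoped ENNReal Classical

/-!
STATEMENT 12: the discrete-determinant densities satisfy the vanishing
non-locality property (H4): if `z = w` on the lattice points within sup-distance
`δ/2` from `0`, then
`φ^ε(z) ≤ φ^ε(w) + ∑_{(ξ₁,…,ξₙ) : ε|ξ_l|_∞ > δ/2 for some l}
                     C_{ξ₁,…,ξₙ}((1/n)∑_l |D^{ξ_l}_ε z(0)|^p + 1)`.
(The nonnegative sums are interpreted in `[0,∞]`.)
-/

/-- Euclidean norm of an integer vector. -/
noncomputable def zEuclNorm {N : ℕ} (ξ : Fin N → ℤ) : ℝ :=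
  Real.sqrt (∑ l, ((ξ l : ℝ)) ^ 2)

/-- Sup norm of an integer vector, as a real number. -/
noncomputable def zSupNorm {N : ℕ} (ξ : Fin N → ℤ) : ℝ :=
  ((Finset.univ.sup fun l => (ξ l).natAbs : ℕ) : ℝ)

/-- Discrete difference quotient `D^ξ_ε u` (the lattice point `j` stands for `εj`). -/
noncomputable def DquotS {N : ℕ} {E : Type*} [AddCommGroup E] [Module ℝ E]
    (ε : ℝ) (ξ : Fin N → ℤ) (u : (Fin N → ℤ) → E) (j : Fin N → ℤ) : E :=
  (ε * zEuclNorm ξ)⁻¹ • (u (j + ξ) - u j)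

/-- The discrete-determinant multibody energy density (value in `[0,∞]`). -/
noncomputable def detDensity {N n : ℕ} (p : ℝ)
    (g : (Fin n → (Fin N → ℤ)) → ℝ → ℝ) (ε : ℝ)
    (z : (Fin N → ℤ) → EuclideanSpace ℝ (Fin n)) : ℝ≥0∞ :=
  (∑' ξt : Fin n → (Fin N → ℤ),
    ENNReal.ofReal (g ξt
      (Matrix.det (Matrix.of fun a l : Fin n =>
        (EuclideanSpace.equiv (Fin n) ℝ) (DquotS ε (ξt l) z 0) a)))) +
  ∑ m : Fin N, ENNReal.ofReal (‖DquotS ε (Pi.single m 1) z 0‖ ^ p)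

/-- Hadamard's inequality for columns in Euclidean space. -/
lemma hadamard_cols {n : ℕ} (v : Fin n → EuclideanSpace ℝ (Fin n)) :
    |Matrix.det (Matrix.of fun a l : Fin n => v l a)| ≤ ∏ l, ‖v l‖ := by
  haveI : Fact (Module.finrank ℝ (EuclideanSpace ℝ (Fin n)) = n) :=
    ⟨finrank_euclideanSpace_fin⟩
  let b := EuclideanSpace.basisFun (Fin n) ℝ
  let o := b.toBasis.orientation
  have h1 : |o.volumeForm v| = |b.toBasis.det v| := o.volumeForm_robust' b v
  have h2 : b.toBasis.det v = Matrix.det (Matrix.of fun a l : Fin n => v l a) := by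
    rw [Module.Basis.det_apply]; rfl
  calc |Matrix.det (Matrix.of fun a l : Fin n => v l a)| = |o.volumeForm v| := by
        rw [h1, h2]
    _ ≤ ∏ l, ‖v l‖ := o.abs_volumeForm_apply_le v

/-- `|det|^{p/n} ≤ (1/n) ∑ ‖v_l‖^p`. -/
lemma det_rpow_le {n : ℕ} (hn : 0 < n) (p : ℝ) (hp : 0 ≤ p)
    (v : Fin n → EuclideanSpace ℝ (Fin n)) :
    |Matrix.det (Matrix.of fun a l : Fin n => v l a)| ^ (p / n) ≤
      (1 / n) * ∑ l, ‖v l‖ ^ p := by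
  have hpn : 0 ≤ p / n := div_nonneg hp (Nat.cast_nonneg n)
  have h1 : |Matrix.det (Matrix.of fun a l : Fin n => v l a)| ^ (p / n) ≤
      (∏ l, ‖v l‖) ^ (p / n) :=
    Real.rpow_le_rpow (abs_nonneg _) (hadamard_cols v) hpn
  have h2 : (∏ l, ‖v l‖) ^ (p / n) = ∏ l, (‖v l‖ ^ p) ^ (1 / (n : ℝ)) := by
    rw [← Real.finset_prod_rpow _ _ (fun l _ => norm_nonneg _)]
    refine Finset.prod_congr rfl fun l _ => ?_
    rw [← Real.rpow_mul (norm_nonneg _), mul_one_div]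
  have h3 : ∏ l, (‖v l‖ ^ p) ^ (1 / (n : ℝ)) ≤
      ∑ l, (1 / (n : ℝ)) * (‖v l‖ ^ p) := by
    refine Real.geom_mean_le_arith_mean_weighted Finset.univ _ _
      (fun i _ => by positivity) ?_ (fun i _ => Real.rpow_nonneg (norm_nonneg _) _)
    rw [Finset.sum_const, Finset.card_univ, Fintype.card_fin, nsmul_eq_mul]
    field_simp
  calc _ ≤ (∏ l, ‖v l‖) ^ (p / n) := h1
    _ = ∏ l, (‖v l‖ ^ p) ^ (1 / (n : ℝ)) := h2
    _ ≤ ∑ l, (1 / (n : ℝ)) * (‖v l‖ ^ p) := h3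
    _ = (1 / n) * ∑ l, ‖v l‖ ^ p := by rw [Finset.mul_sum]

theorem detDensity_vanishing_nonlocality {N n : ℕ} (hN : 0 < N) (hn : 0 < n)
    (p ε δ : ℝ) (hp : 1 < p) (hε : 0 < ε) (hδ : 0 < δ) (hεδ : ε ≤ δ / 2)
    (g : (Fin n → (Fin N → ℤ)) → ℝ → ℝ) (C : (Fin n → (Fin N → ℤ)) → ℝ)
    (hg0 : ∀ ξt t, 0 ≤ g ξt t) (hC : ∀ ξt, 0 ≤ C ξt)
    (hgrowth : ∀ ξt t, g ξt t ≤ C ξt * (|t| ^ (p / n) + 1))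
    (hS : Summable C)
    (z w : (Fin N → ℤ) → EuclideanSpace ℝ (Fin n))
    (hzw : ∀ j : Fin N → ℤ, (∀ l, |ε * (j l : ℝ)| ≤ δ / 2) → z j = w j) :
    detDensity p g ε z ≤
      detDensity p g ε w +
        ∑' ξt : Fin n → (Fin N → ℤ),
          (if ∃ l, δ / 2 < ε * zSupNorm (ξt l) then
            ENNReal.ofReal (C ξt *
              ((1 / n) * ∑ l : Fin n, ‖DquotS ε (ξt l) z 0‖ ^ p + 1))
          else 0) := by
  -- if ξ is small in sup norm, the difference quotients agree
  have hD : ∀ ξ : Fin N → ℤ, ε * zSupNorm ξ ≤ δ / 2 →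
      DquotS ε ξ z 0 = DquotS ε ξ w 0 := by
    intro ξ hξ
    have hz0 : z 0 = w 0 := hzw 0 (by intro l; simp; positivity)
    have hzξ : z (0 + ξ) = w (0 + ξ) := by
      refine hzw _ fun l => ?_
      have h1 : |(ξ l : ℝ)| ≤ zSupNorm ξ := by
        rw [zSupNorm, ← Int.cast_abs, Int.abs_eq_natAbs]
        exact_mod_cast Finset.le_sup (f := fun l => (ξ l).natAbs) (Finset.mem_univ l)
      have : |ε * ((0 + ξ) l : ℝ)| = ε * |(ξ l : ℝ)| := by
        rw [abs_mul, abs_of_pos hε]; simp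
      rw [this]
      exact le_trans (mul_le_mul_of_nonneg_left h1 hε.le) hξ
    rw [DquotS, DquotS, hz0, hzξ]
  -- the single-site (nearest-neighbour) part agrees
  have hB : ∀ m : Fin N, DquotS ε (Pi.single m 1) z 0 = DquotS ε (Pi.single m 1) w 0 := by
    intro m
    refine hD _ ?_
    have : zSupNorm (Pi.single m 1 : Fin N → ℤ) ≤ 1 := by
      rw [zSupNorm]
      have : (Finset.univ.sup fun l => ((Pi.single m 1 : Fin N → ℤ) l).natAbs) ≤ 1 := by
        refine Finset.sup_le fun l _ => ?_
        by_cases h : l = m <;> simp [h, Pi.single_apply]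
      exact_mod_cast this
    calc ε * zSupNorm (Pi.single m 1 : Fin N → ℤ) ≤ ε * 1 :=
          mul_le_mul_of_nonneg_left this hε.le
      _ ≤ δ / 2 := by linarith
  -- pointwise comparison of the multibody terms
  have hpt : ∀ ξt : Fin n → (Fin N → ℤ),
      ENNReal.ofReal (g ξt
        (Matrix.det (Matrix.of fun a l : Fin n =>
          (EuclideanSpace.equiv (Fin n) ℝ) (DquotS ε (ξt l) z 0) a))) ≤
      ENNReal.ofReal (g ξt
        (Matrix.det (Matrix.of fun a l : Fin n =>
          (EuclideanSpace.equiv (Fin n) ℝ) (DquotS ε (ξt l) w 0) a))) +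
      (if ∃ l, δ / 2 < ε * zSupNorm (ξt l) then
        ENNReal.ofReal (C ξt *
          ((1 / n) * ∑ l : Fin n, ‖DquotS ε (ξt l) z 0‖ ^ p + 1))
      else 0) := by
    intro ξt
    by_cases h : ∃ l, δ / 2 < ε * zSupNorm (ξt l)
    · rw [if_pos h]
      refine le_add_of_nonneg_of_le zero_le (ENNReal.ofReal_le_ofReal ?_)
      refine le_trans (hgrowth _ _) ?_
      refine mul_le_mul_of_nonneg_left ?_ (hC _)
      refine add_le_add_left ?_ 1
      exact det_rpow_le hn p (by linarith) (fun l => DquotS ε (ξt l) z 0)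
    · rw [if_neg h, add_zero]
      push_neg at h
      have : ∀ l, DquotS ε (ξt l) z 0 = DquotS ε (ξt l) w 0 := fun l => hD _ (h l)
      simp only [this]
      exact le_refl _
  -- assemble
  rw [detDensity, detDensity]
  have hBeq : (∑ m : Fin N, ENNReal.ofReal (‖DquotS ε (Pi.single m 1) z 0‖ ^ p)) =
      ∑ m : Fin N, ENNReal.ofReal (‖DquotS ε (Pi.single m 1) w 0‖ ^ p) := by
    refine Finset.sum_congr rfl fun m _ => ?_
    rw [hB m]
  rw [hBeq]
  have hA := ENNReal.tsum_le_tsum hpt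
  rw [ENNReal.tsum_add] at hA
  calc _ ≤ ((∑' ξt : Fin n → (Fin N → ℤ),
        ENNReal.ofReal (g ξt
          (Matrix.det (Matrix.of fun a l : Fin n =>
            (EuclideanSpace.equiv (Fin n) ℝ) (DquotS ε (ξt l) w 0) a)))) +
      ∑' ξt : Fin n → (Fin N → ℤ),
        (if ∃ l, δ / 2 < ε * zSupNorm (ξt l) then
          ENNReal.ofReal (C ξt *
            ((1 / n) * ∑ l : Fin n, ‖DquotS ε (ξt l) z 0‖ ^ p + 1))
        else 0)) +
      ∑ m : Fin N, ENNReal.ofReal (‖DquotS ε (Pi.single m 1) w 0‖ ^ p) :=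
        add_le_add_left hA _
    _ = _ := by ring
end

section
/- Let V(r) = r^{−12} − 2r^{−6} for r > 0 (the normalized Lennard-Jones potential), so that V''(r) = 156 r^{−14} − 84 r^{−8}. Then the series ∑_{k=2}^∞ V''(k)(3k² − 3k + 1) converges absolutely, and −12 V''(√2) − 3 ∑_{k=2}^∞ V''(k)(3k² − 3k + 1) < V''(1). -/
/-!
STATEMENT 13: For the normalized Lennard-Jones potential `V(r) = r⁻¹² - 2 r⁻⁶`
(whose second derivative is `V''(r) = 156 r⁻¹⁴ - 84 r⁻⁸`), the series
`∑_{k=2}^∞ V''(k)(3k² - 3k + 1)` converges absolutely and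
`-12 V''(√2) - 3 ∑_{k=2}^∞ V''(k)(3k² - 3k + 1) < V''(1)`.
-/

noncomputable def LJpot (r : ℝ) : ℝ := r ^ (-12 : ℤ) - 2 * r ^ (-6 : ℤ)

lemma deriv_LJ {r : ℝ} (hr : r ≠ 0) :
    deriv LJpot r = -12 * r ^ (-13 : ℤ) + 12 * r ^ (-7 : ℤ) := by
  have h1 : HasDerivAt (fun x : ℝ => x ^ (-12 : ℤ)) (((-12 : ℤ) : ℝ) * r ^ ((-12 : ℤ) - 1)) r :=
    hasDerivAt_zpow _ _ (Or.inl hr)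
  have h2 : HasDerivAt (fun x : ℝ => x ^ (-6 : ℤ)) (((-6 : ℤ) : ℝ) * r ^ ((-6 : ℤ) - 1)) r :=
    hasDerivAt_zpow _ _ (Or.inl hr)
  have h : HasDerivAt LJpot
      (((-12 : ℤ) : ℝ) * r ^ ((-12 : ℤ) - 1) - 2 * (((-6 : ℤ) : ℝ) * r ^ ((-6 : ℤ) - 1))) r := by
    exact h1.sub (h2.const_mul 2)
  rw [h.deriv]
  norm_num
  ring

lemma deriv2_LJ {r : ℝ} (hr : r ≠ 0) :
    deriv (deriv LJpot) r = 156 * r ^ (-14 : ℤ) - 84 * r ^ (-8 : ℤ) := by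
  have hev : deriv LJpot =ᶠ[nhds r] fun x => -12 * x ^ (-13 : ℤ) + 12 * x ^ (-7 : ℤ) := by
    filter_upwards [isOpen_compl_singleton.mem_nhds (by simpa using hr :
      r ∈ ({0}ᶜ : Set ℝ))] with x hx
    exact deriv_LJ hx
  rw [hev.deriv_eq]
  have h1 : HasDerivAt (fun x : ℝ => x ^ (-13 : ℤ)) (((-13 : ℤ) : ℝ) * r ^ ((-13 : ℤ) - 1)) r :=
    hasDerivAt_zpow _ _ (Or.inl hr)
  have h2 : HasDerivAt (fun x : ℝ => x ^ (-7 : ℤ)) (((-7 : ℤ) : ℝ) * r ^ ((-7 : ℤ) - 1)) r :=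
    hasDerivAt_zpow _ _ (Or.inl hr)
  have h : HasDerivAt (fun x : ℝ => -12 * x ^ (-13 : ℤ) + 12 * x ^ (-7 : ℤ))
      (-12 * (((-13 : ℤ) : ℝ) * r ^ ((-13 : ℤ) - 1)) + 12 * (((-7 : ℤ) : ℝ) * r ^ ((-7 : ℤ) - 1))) r :=
    (h1.const_mul (-12)).add (h2.const_mul 12)
  rw [h.deriv]
  norm_num
  ring

lemma telly : HasSum (fun k : ℕ => 1 / (((k : ℝ) + 1) * ((k : ℝ) + 2))) 1 := by
  have key : ∀ k : ℕ, 1 / (((k : ℝ) + 1) * ((k : ℝ) + 2)) = 1 / ((k : ℝ) + 1) - 1 / ((k : ℝ) + 2) := by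
    intro k
    have h1 : ((k : ℝ) + 1) ≠ 0 := by positivity
    have h2 : ((k : ℝ) + 2) ≠ 0 := by positivity
    field_simp
    ring
  rw [hasSum_iff_tendsto_nat_of_nonneg (fun k => by positivity) 1]
  have hps : ∀ n : ℕ, ∑ i ∈ Finset.range n, 1 / (((i : ℝ) + 1) * ((i : ℝ) + 2))
      = 1 - 1 / ((n : ℝ) + 1) := by
    intro n
    have := Finset.sum_range_sub' (fun i : ℕ => 1 / ((i : ℝ) + 1)) n
    simp only [key]
    rw [Finset.sum_congr rfl (fun i _ => by push_cast; ring :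
      ∀ i ∈ Finset.range n, (1 / ((i : ℝ) + 1) - 1 / ((i : ℝ) + 2))
        = (fun i : ℕ => 1 / ((i : ℝ) + 1)) i - (fun i : ℕ => 1 / ((i : ℝ) + 1)) (i + 1)), this]
    norm_num
  simp only [hps]
  have : Filter.Tendsto (fun n : ℕ => 1 / ((n : ℝ) + 1)) Filter.atTop (nhds 0) :=
    tendsto_one_div_add_atTop_nhds_zero_nat
  simpa using (tendsto_const_nhds.sub this)


lemma aux_bound (n : ℝ) (hn : 2 ≤ n) :
    |(156 * n ^ (-14 : ℤ) - 84 * n ^ (-8 : ℤ)) * (3 * n ^ 2 - 3 * n + 1)| ≤ 252 / n ^ 6 := by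
  have hn0 : (0:ℝ) < n := by linarith
  have e14 : n ^ (-14 : ℤ) = (n ^ (14:ℕ))⁻¹ := by
    rw [zpow_neg]; norm_cast
  have e8 : n ^ (-8 : ℤ) = (n ^ (8:ℕ))⁻¹ := by
    rw [zpow_neg]; norm_cast
  rw [e14, e8]
  have h6 : (64:ℝ) ≤ n ^ 6 := by
    calc (64:ℝ) = 2 ^ 6 := by norm_num
    _ ≤ n ^ 6 := pow_le_pow_left₀ (by norm_num) hn 6
  have hB : (0:ℝ) ≤ 3 * n ^ 2 - 3 * n + 1 := by nlinarith
  have hA : 156 * (n ^ (14:ℕ))⁻¹ - 84 * (n ^ (8:ℕ))⁻¹ ≤ 0 := by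
    rw [sub_nonpos, inv_eq_one_div, inv_eq_one_div, mul_one_div, mul_one_div,
      div_le_div_iff₀ (by positivity) (by positivity)]
    have key : n ^ 8 * 64 ≤ n ^ 8 * n ^ 6 :=
      mul_le_mul_of_nonneg_left h6 (by positivity)
    nlinarith [key]
  rw [abs_mul, abs_of_nonpos hA, abs_of_nonneg hB]
  have expand : -(156 * (n ^ (14:ℕ))⁻¹ - 84 * (n ^ (8:ℕ))⁻¹) = (84 * n ^ 6 - 156) / n ^ 14 := by
    field_simp
    ring
  rw [expand, div_mul_eq_mul_div, div_le_div_iff₀ (by positivity) (by positivity)]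
  have h1 : (0:ℝ) ≤ 3 * n - 1 := by linarith
  have h2 : (0:ℝ) ≤ n - 1 := by linarith
  nlinarith [mul_nonneg (mul_nonneg (pow_nonneg hn0.le 12) h1) (by norm_num : (0:ℝ) ≤ 84),
    mul_nonneg (mul_nonneg (pow_nonneg hn0.le 7) h2) (by norm_num : (0:ℝ) ≤ 468),
    pow_nonneg hn0.le 6]

theorem lennardJones_coercivity :
    (∀ r : ℝ, 0 < r →
      deriv (deriv LJpot) r = 156 * r ^ (-14 : ℤ) - 84 * r ^ (-8 : ℤ)) ∧
    (Summable fun k : ℕ =>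
      |deriv (deriv LJpot) ((k : ℝ) + 2) * (3 * ((k : ℝ) + 2) ^ 2 - 3 * ((k : ℝ) + 2) + 1)|) ∧
    -12 * deriv (deriv LJpot) (Real.sqrt 2) -
        3 * ∑' k : ℕ,
          deriv (deriv LJpot) ((k : ℝ) + 2) * (3 * ((k : ℝ) + 2) ^ 2 - 3 * ((k : ℝ) + 2) + 1)
      < deriv (deriv LJpot) 1 := by
  have part1 : ∀ r : ℝ, 0 < r →
      deriv (deriv LJpot) r = 156 * r ^ (-14 : ℤ) - 84 * r ^ (-8 : ℤ) :=
    fun r hr => deriv2_LJ hr.ne'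
  set F : ℕ → ℝ := fun k =>
    deriv (deriv LJpot) ((k : ℝ) + 2) * (3 * ((k : ℝ) + 2) ^ 2 - 3 * ((k : ℝ) + 2) + 1) with hF
  have hFval : ∀ k : ℕ, F k = (156 * ((k:ℝ)+2) ^ (-14 : ℤ) - 84 * ((k:ℝ)+2) ^ (-8 : ℤ))
      * (3 * ((k : ℝ) + 2) ^ 2 - 3 * ((k : ℝ) + 2) + 1) := by
    intro k
    rw [hF]
    simp only
    rw [part1 _ (by positivity)]
  have hk2 : ∀ k : ℕ, (2:ℝ) ≤ (k:ℝ) + 2 := fun k => le_add_of_nonneg_left (Nat.cast_nonneg k)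
  -- absolute bound giving summability
  have habs_le : ∀ k : ℕ, |F k| ≤ (63/4) * (1 / (((k:ℝ)+1) * ((k:ℝ)+2))) := by
    intro k
    rw [hFval k]
    refine le_trans (aux_bound _ (hk2 k)) ?_
    rw [mul_one_div, div_le_div_iff₀ (by positivity) (by positivity)]
    have h4 : (16:ℝ) ≤ ((k:ℝ)+2) ^ 4 := by
      calc (16:ℝ) = 2 ^ 4 := by norm_num
      _ ≤ ((k:ℝ)+2) ^ 4 := pow_le_pow_left₀ (by norm_num) (hk2 k) 4
    have hx : (0:ℝ) ≤ (k:ℝ) := Nat.cast_nonneg k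
    nlinarith [mul_le_mul h4 (by nlinarith : ((k:ℝ)+1)*((k:ℝ)+2) ≤ ((k:ℝ)+2)^2)
      (by positivity) (by positivity)]
  have hg : HasSum (fun k : ℕ => (63/4 : ℝ) * (1 / (((k:ℝ)+1) * ((k:ℝ)+2)))) (63/4) := by
    simpa using telly.mul_left (63/4)
  have part2 : Summable fun k : ℕ => |F k| :=
    Summable.of_nonneg_of_le (fun k => abs_nonneg _) habs_le hg.summable
  have hs : Summable F := part2.of_abs
  -- tail bound
  have htail_le : ∀ k : ℕ, -F (k+1) ≤ (28/9) * (1 / (((k:ℝ)+1) * ((k:ℝ)+2))) := by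
    intro k
    refine le_trans (neg_le_abs _) ?_
    rw [hFval (k+1)]
    have hc : ((k+1 : ℕ) : ℝ) + 2 = (k:ℝ) + 3 := by push_cast; ring
    rw [hc]
    have hx0 : (0:ℝ) ≤ (k:ℝ) := Nat.cast_nonneg k
    refine le_trans (aux_bound _ (by linarith)) ?_
    rw [mul_one_div, div_le_div_iff₀ (by positivity) (by positivity)]
    have h4 : (81:ℝ) ≤ ((k:ℝ)+3) ^ 4 := by
      calc (81:ℝ) = 3 ^ 4 := by norm_num
      _ ≤ ((k:ℝ)+3) ^ 4 := pow_le_pow_left₀ (by norm_num) (by linarith) 4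
    have hx : (0:ℝ) ≤ (k:ℝ) := Nat.cast_nonneg k
    nlinarith [mul_le_mul h4 (by nlinarith : ((k:ℝ)+1)*((k:ℝ)+2) ≤ ((k:ℝ)+3)^2)
      (by positivity) (by positivity)]
  have hg2 : HasSum (fun k : ℕ => (28/9 : ℝ) * (1 / (((k:ℝ)+1) * ((k:ℝ)+2)))) (28/9) := by
    simpa using telly.mul_left (28/9)
  have hstail : Summable fun k => F (k+1) := (summable_nat_add_iff 1).mpr hs
  have htail : -(28/9 : ℝ) ≤ ∑' k : ℕ, F (k+1) := by
    have h1 : ∑' k : ℕ, -F (k+1) ≤ (28/9 : ℝ) := by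
      rw [← hg2.tsum_eq]
      exact Summable.tsum_le_tsum htail_le hstail.neg hg2.summable
    rw [tsum_neg] at h1
    linarith
  have hsplit : ∑' k : ℕ, F k = F 0 + ∑' k : ℕ, F (k+1) := Summable.tsum_eq_zero_add hs
  have hF0 : F 0 = -9135/4096 := by
    rw [hFval 0]
    norm_num
  have h1 : deriv (deriv LJpot) 1 = 72 := by
    rw [part1 1 one_pos]
    norm_num
  have hsqrt : deriv (deriv LJpot) (Real.sqrt 2) = -129/32 := by
    rw [part1 _ (Real.sqrt_pos.mpr (by norm_num))]
    have hsq : Real.sqrt 2 ^ (2:ℕ) = 2 := Real.sq_sqrt (by norm_num)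
    have hs14 : Real.sqrt 2 ^ (14:ℕ) = 128 := by
      rw [show (14:ℕ) = 2*7 from rfl, pow_mul, hsq]; norm_num
    have hs8 : Real.sqrt 2 ^ (8:ℕ) = 16 := by
      rw [show (8:ℕ) = 2*4 from rfl, pow_mul, hsq]; norm_num
    have h14 : Real.sqrt 2 ^ (-14 : ℤ) = 1/128 := by
      rw [zpow_neg, show ((14:ℤ)) = ((14:ℕ):ℤ) by norm_num, zpow_natCast, hs14]; norm_num
    have h8 : Real.sqrt 2 ^ (-8 : ℤ) = 1/16 := by
      rw [zpow_neg, show ((8:ℤ)) = ((8:ℕ):ℤ) by norm_num, zpow_natCast, hs8]; norm_num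
    rw [h14, h8]; norm_num
  refine ⟨part1, part2, ?_⟩
  rw [h1, hsqrt, hsplit, hF0]
  linarith [htail]
end
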